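/- If u^{n+1} satisfies u_i^{n+1} + c_{i-1}(u_i^{n+1} - u_{i-1}^{n+1}) = u_i^n for i = 1, ..., I with coefficients c_{i-1} ≥ 0, and the boundary conditions u_1^{n+1} = u_0^{n+1} and u_I^{n+1} = u_{I-1}^{n+1} hold, then the total variation does not increase: ∑_{i=1}^{I} |u_i^{n+1} - u_{i-1}^{n+1}| ≤ ∑_{i=1}^{I} |u_i^n - u_{i-1}^n|. -/

import Mathlib

theorem tvd_of_nonneg_coeffs (I : ℕ) (hI : 2 ≤ I)
    (un un1 c : ℕ → ℝ)
    (hc : ∀ i, 0 ≤ c i)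
    (hscheme : ∀ i, 1 ≤ i → i ≤ I →
      un1 i + c (i - 1) * (un1 i - un1 (i - 1)) = un i)
    (hbc0 : un1 1 = un1 0) (hbcI : un1 I = un1 (I - 1)) :
    ∑ i ∈ Finset.Icc 1 I, |un1 i - un1 (i - 1)| ≤
      ∑ i ∈ Finset.Icc 1 I, |un i - un (i - 1)| := by
  set g : ℕ → ℝ := fun i => |un1 i - un1 (i - 1)| with hg
  set D : ℕ → ℝ := fun i => |un i - un (i - 1)| with hD
  have hg1 : g 1 = 0 := by simp [hg, hbc0]
  have hgI : g I = 0 := by simp [hg, hbcI]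
  have hgnn : ∀ i, 0 ≤ g i := fun i => abs_nonneg _
  -- key pointwise estimate
  have key : ∀ i ∈ Finset.Icc 2 I,
      g i + c (i - 1) * g i ≤ D i + c (i - 2) * g (i - 1) := by
    intro i hi
    rw [Finset.mem_Icc] at hi
    have h1 := hscheme i (by omega) hi.2
    have h2 := hscheme (i - 1) (by omega) (by omega)
    have e1 : i - 1 - 1 = i - 2 := by omega
    rw [e1] at h2
    have hDi : un i - un (i - 1) =
        (1 + c (i - 1)) * (un1 i - un1 (i - 1))
          - c (i - 2) * (un1 (i - 1) - un1 (i - 2)) := by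
      rw [← h1, ← h2]; ring
    have habs : |(1 + c (i - 1)) * (un1 i - un1 (i - 1))|
        - |c (i - 2) * (un1 (i - 1) - un1 (i - 2))| ≤ D i := by
      rw [hD]; simp only []; rw [hDi]
      exact abs_sub_abs_le_abs_sub _ _
    have hc1 : (0:ℝ) ≤ 1 + c (i - 1) := by linarith [hc (i - 1)]
    rw [abs_mul, abs_mul, abs_of_nonneg hc1, abs_of_nonneg (hc (i - 2))] at habs
    simp only [hg]
    rw [e1]
    nlinarith [abs_nonneg (un1 i - un1 (i - 1))]
  have hsum := Finset.sum_le_sum key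
  -- reindex the shifted sum
  have hmap : Finset.Icc 2 I =
      Finset.map (addRightEmbedding 1) (Finset.Icc 1 (I - 1)) := by
    rw [Finset.map_add_right_Icc]
    congr 1
    omega
  have hshift : ∑ i ∈ Finset.Icc 2 I, c (i - 2) * g (i - 1)
      = ∑ j ∈ Finset.Icc 1 (I - 1), c (j - 1) * g j := by
    rw [hmap, Finset.sum_map]
    refine Finset.sum_congr rfl ?_
    intro j hj
    simp only [addRightEmbedding_apply]
    have e2 : j + 1 - 2 = j - 1 := by omega
    have e3 : j + 1 - 1 = j := by omega
    rw [e2, e3]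
  have hA : ∑ j ∈ Finset.Icc 1 (I - 1), c (j - 1) * g j
      = ∑ j ∈ Finset.Icc 2 (I - 1), c (j - 1) * g j := by
    have hins : Finset.Icc 1 (I - 1) = insert 1 (Finset.Icc 2 (I - 1)) := by
      ext x; simp [Finset.mem_Icc]; omega
    rw [hins, Finset.sum_insert (by simp [Finset.mem_Icc]), hg1]; ring_nf
  have hB : ∑ i ∈ Finset.Icc 2 I, c (i - 1) * g i
      = ∑ j ∈ Finset.Icc 2 (I - 1), c (j - 1) * g j := by
    have hins : Finset.Icc 2 I = insert I (Finset.Icc 2 (I - 1)) := by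
      ext x; simp [Finset.mem_Icc]; omega
    rw [hins, Finset.sum_insert (by simp [Finset.mem_Icc]; omega), hgI]; ring_nf
  simp only [Finset.sum_add_distrib] at hsum
  rw [hshift, hA, ← hB] at hsum
  have hsum2 : ∑ i ∈ Finset.Icc 2 I, g i ≤ ∑ i ∈ Finset.Icc 2 I, D i := by
    linarith
  have hIg : ∑ i ∈ Finset.Icc 1 I, g i = ∑ i ∈ Finset.Icc 2 I, g i := by
    have hins : Finset.Icc 1 I = insert 1 (Finset.Icc 2 I) := by
      ext x; simp [Finset.mem_Icc]; omega
    rw [hins, Finset.sum_insert (by simp [Finset.mem_Icc]), hg1, zero_add]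
  have hID : ∑ i ∈ Finset.Icc 2 I, D i ≤ ∑ i ∈ Finset.Icc 1 I, D i := by
    have hins : Finset.Icc 1 I = insert 1 (Finset.Icc 2 I) := by
      ext x; simp [Finset.mem_Icc]; omega
    rw [hins, Finset.sum_insert (by simp [Finset.mem_Icc])]
    have : (0:ℝ) ≤ D 1 := abs_nonneg _
    linarith
  calc ∑ i ∈ Finset.Icc 1 I, g i = ∑ i ∈ Finset.Icc 2 I, g i := hIg
    _ ≤ ∑ i ∈ Finset.Icc 2 I, D i := hsum2
    _ ≤ ∑ i ∈ Finset.Icc 1 I, D i := hID
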